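/- Let g : ℝ → ℝ be of the form g(x) = a + b cos x + c sin x for real constants a, b, c. Then for every s ∈ ℝ with sin s ≠ 0 (i.e. s not an integer multiple of π) and every x ∈ ℝ, the parameter shift rule holds: g'(x) = (g(x+s) − g(x−s))/(2 sin s). -/

import Mathlib

/-- the parameter shift rule. If `g(x) = a + b cos x + c sin x`, then
for any shift `s` with `sin s ≠ 0`, `g'(x) = (g(x+s) − g(x−s))/(2 sin s)`. -/
theorem parameter_shift_rule
    (a b c : ℝ) (g : ℝ → ℝ)
    (hg : ∀ x, g x = a + b * Real.cos x + c * Real.sin x)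
    (s : ℝ) (hs : Real.sin s ≠ 0) (x : ℝ) :
    deriv g x = (g (x + s) - g (x - s)) / (2 * Real.sin s) := by
  have hfun : g = fun x => a + b * Real.cos x + c * Real.sin x := funext hg
  subst hfun
  have hd : HasDerivAt (fun x => a + b * Real.cos x + c * Real.sin x)
      (b * (-Real.sin x) + c * Real.cos x) x := by
    simpa [Pi.add_def] using ((hasDerivAt_const x a).add ((Real.hasDerivAt_cos x).const_mul b)).add
      ((Real.hasDerivAt_sin x).const_mul c)
  rw [hd.deriv]
  simp only
  simp only [Real.cos_add, Real.sin_add, Real.cos_sub, Real.sin_sub]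
  field_simp
  ring
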